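/- Let F : ℝⁿ → ℝ be a differentiable convex function whose gradient has unit norm everywhere: ‖∇F(x)‖ = 1 for all x. Fix p and let γ(t) = p + t∇F(p). Then F(γ(t)) = F(p) + t for all t ∈ ℝ, and ∇F(γ(t)) = ∇F(p) for all t. -/

import Mathlib

open Set InnerProductSpace

variable {E : Type*} [NormedAddCommGroup E] [InnerProductSpace ℝ E] [CompleteSpace E]

/-- Gradient inequality for convex functions. -/
theorem grad_ineq {F : E → ℝ} (hF : ConvexOn ℝ Set.univ F) {G x : E}
    (hx : HasGradientAt F G x) (y : E) :
    F x + ⟪G, y - x⟫_ℝ ≤ F y := by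
  have hline : HasDerivAt (fun τ : ℝ => x + τ • (y - x)) (y - x) 0 := by
    simpa using ((hasDerivAt_id (0:ℝ)).smul_const (y - x)).const_add x
  have h0 : x + (0:ℝ) • (y - x) = x := by simp
  have hD : HasDerivAt (fun τ : ℝ => F (x + τ • (y - x))) ⟪G, y - x⟫_ℝ 0 := by
    have hFd : HasFDerivAt F (toDual ℝ E G) (x + (0:ℝ) • (y - x)) := by
      rw [h0]; exact hx.hasFDerivAt
    have := hFd.comp_hasDerivAt 0 hline
    simp at this
    exact this
  have hslope : ∀ τ ∈ Ioc (0:ℝ) 1,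
      slope (fun τ : ℝ => F (x + τ • (y - x))) 0 τ ≤ F y - F x := by
    intro τ hτ
    have hcomb : x + τ • (y - x) = (1 - τ) • x + τ • y := by
      rw [smul_sub, sub_smul, one_smul]; abel
    have h2 := hF.2 (mem_univ x) (mem_univ y) (by linarith [hτ.2] : (0:ℝ) ≤ 1 - τ)
      (le_of_lt hτ.1) (by ring)
    rw [slope_def_field]
    have h1 : F (x + τ • (y - x)) ≤ (1 - τ) * F x + τ * F y := by rw [hcomb]; exact h2
    rw [h0, sub_zero, div_le_iff₀ hτ.1]
    nlinarith [hτ.1]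
  have htend : Filter.Tendsto (slope (fun τ : ℝ => F (x + τ • (y - x))) 0)
      (nhdsWithin 0 (Ioi (0:ℝ))) (nhds ⟪G, y - x⟫_ℝ) :=
    (hasDerivAt_iff_tendsto_slope.1 hD).mono_left
      (nhdsWithin_mono _ (fun a ha => ne_of_gt ha))
  have hle : ⟪G, y - x⟫_ℝ ≤ F y - F x :=
    le_of_tendsto htend (Filter.mem_of_superset
      (Ioc_mem_nhdsGT_of_mem (by norm_num : (0:ℝ) ∈ Ico (0:ℝ) 1))
      (fun τ hτ => hslope τ hτ))
  linarith

/-- Existence of a critical point of the quadratically perturbed linear tilt. -/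
theorem perturbed_min [FiniteDimensional ℝ E] {F : E → ℝ} {g : E → E}
    (hgrad : ∀ x, HasGradientAt F (g x) x)
    {y : E} {C0 : ℝ} (hlow : ∀ x, C0 + ⟪y, x⟫_ℝ ≤ F x)
    {ε : ℝ} (hεpos : 0 < ε) :
    ∃ z : E, y = g z + ε • z ∧ ε / 2 * ‖z‖ ^ 2 ≤ F 0 - C0 := by
  set Ψ : E → ℝ := fun x => F x - ⟪y, x⟫_ℝ + ε / 2 * ⟪x, x⟫_ℝ with hΨ
  have hFc : Continuous F := continuous_iff_continuousAt.2 fun x => (hgrad x).continuousAt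
  have hΨc : Continuous Ψ := by
    refine (hFc.sub ?_).add (continuous_const.mul ?_)
    · exact Continuous.inner continuous_const continuous_id
    · exact Continuous.inner continuous_id continuous_id
  have hΨlow : ∀ x, C0 + ε / 2 * ‖x‖ ^ 2 ≤ Ψ x := by
    intro x
    have h1 := hlow x
    simp only [hΨ, real_inner_self_eq_norm_sq]
    linarith
  have hΨ0 : Ψ 0 = F 0 := by simp [hΨ]
  obtain ⟨R, hRnn, hRbig⟩ : ∃ R : ℝ, 0 ≤ R ∧ F 0 - C0 + 1 ≤ ε / 2 * R ^ 2 := by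
    refine ⟨Real.sqrt (2 * (F 0 - C0 + 1) / ε), Real.sqrt_nonneg _, ?_⟩
    have hnn : 0 ≤ 2 * (F 0 - C0 + 1) / ε := by
      have := hlow 0
      simp only [inner_zero_right, add_zero] at this
      have h2 : 0 ≤ F 0 - C0 := by linarith
      positivity
    rw [Real.sq_sqrt hnn]
    have heq : ε / 2 * (2 * (F 0 - C0 + 1) / ε) = F 0 - C0 + 1 := by
      field_simp
    linarith [heq]
  obtain ⟨z, hzmem, hz⟩ := (isCompact_closedBall (0 : E) R).exists_isMinOn
    ⟨0, Metric.mem_closedBall_self hRnn⟩ hΨc.continuousOn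
  have hglobal : ∀ x, Ψ z ≤ Ψ x := by
    intro x
    by_cases hx : x ∈ Metric.closedBall (0 : E) R
    · exact hz hx
    · simp only [Metric.mem_closedBall, dist_zero_right, not_le] at hx
      have hxx : R ^ 2 ≤ ‖x‖ ^ 2 := by nlinarith [norm_nonneg x]
      have h2 : Ψ 0 < Ψ x := by
        have h3 := hΨlow x
        have h4 : ε / 2 * R ^ 2 ≤ ε / 2 * ‖x‖ ^ 2 := by nlinarith
        have h5 : F 0 < C0 + ε / 2 * ‖x‖ ^ 2 := by linarith
        rw [hΨ0]
        exact lt_of_lt_of_le h5 h3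
      exact (hz (Metric.mem_closedBall_self hRnn)).trans h2.le
  have hkey : ∀ w : E, ⟪g z - y + ε • z, w⟫_ℝ = 0 := by
    intro w
    have hl : HasDerivAt (fun τ : ℝ => z + τ • w) w 0 := by
      simpa using ((hasDerivAt_id (0 : ℝ)).smul_const w).const_add z
    have hF' : HasDerivAt (fun τ : ℝ => F (z + τ • w)) ⟪g z, w⟫_ℝ 0 := by
      have hFd : HasFDerivAt F (toDual ℝ E (g z)) (z + (0 : ℝ) • w) := by
        rw [show z + (0 : ℝ) • w = z by simp]; exact (hgrad z).hasFDerivAt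
      have := hFd.comp_hasDerivAt 0 hl
      simp at this
      exact this
    have hy' : HasDerivAt (fun τ : ℝ => ⟪y, z + τ • w⟫_ℝ) ⟪y, w⟫_ℝ 0 := by
      simpa using (hasDerivAt_const (0 : ℝ) y).inner ℝ hl
    have hq : HasDerivAt (fun τ : ℝ => ⟪z + τ • w, z + τ • w⟫_ℝ)
        (⟪z, w⟫_ℝ + ⟪w, z⟫_ℝ) 0 := by
      simpa using hl.inner ℝ hl
    have htot : HasDerivAt (fun τ : ℝ => Ψ (z + τ • w))
        (⟪g z, w⟫_ℝ - ⟪y, w⟫_ℝ + ε / 2 * (⟪z, w⟫_ℝ + ⟪w, z⟫_ℝ)) 0 :=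
      (hF'.sub hy').add (hq.const_mul (ε / 2))
    have hloc : IsLocalMin (fun τ : ℝ => Ψ (z + τ • w)) 0 :=
      Filter.Eventually.of_forall fun τ => by
        simpa using hglobal (z + τ • w)
    have hzero := hloc.hasDerivAt_eq_zero htot
    have hcomm : ⟪w, z⟫_ℝ = ⟪z, w⟫_ℝ := real_inner_comm z w
    rw [inner_add_left, inner_sub_left, real_inner_smul_left]
    rw [hcomm] at hzero
    linarith [hzero]
  refine ⟨z, ?_, ?_⟩
  · have h0 := hkey (g z - y + ε • z)
    rw [inner_self_eq_zero] at h0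
    rw [sub_add_eq_add_sub, sub_eq_zero] at h0
    exact h0.symm
  · have h1 := hglobal 0
    rw [hΨ0] at h1
    have h2 : C0 + ε / 2 * ‖z‖ ^ 2 ≤ F 0 := le_trans (hΨlow z) h1
    linarith

/-- The gradient of a convex function with unit-norm gradient is globally constant. -/
theorem grad_const [FiniteDimensional ℝ E] {F : E → ℝ} {g : E → E}
    (hF : ConvexOn ℝ Set.univ F)
    (hgrad : ∀ x, HasGradientAt F (g x) x)
    (hunit : ∀ x, ‖g x‖ = 1) (p q : E) : g q = g p := by
  by_contra hne
  have hlt : ⟪g p, g q⟫_ℝ < 1 := (inner_lt_one_iff_real_of_norm_eq_one (hunit p) (hunit q)).2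
    (fun h => hne h.symm)
  obtain ⟨y, hy⟩ : ∃ y : E, y = (2⁻¹ : ℝ) • (g p + g q) := ⟨_, rfl⟩
  have hynorm : ‖y‖ < 1 := by
    have hsq : ‖y‖ ^ 2 < 1 := by
      have h1 : ‖g p + g q‖ ^ 2 = ‖g p‖ ^ 2 + 2 * ⟪g p, g q⟫_ℝ + ‖g q‖ ^ 2 :=
        norm_add_sq_real (g p) (g q)
      rw [hunit p, hunit q] at h1
      rw [hy, norm_smul, mul_pow]
      simp only [norm_inv, Real.norm_ofNat]
      nlinarith
    nlinarith [norm_nonneg y]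
  obtain ⟨C0, hC0⟩ : ∃ C0 : ℝ,
      C0 = (F p + F q) / 2 - (⟪g p, p⟫_ℝ + ⟪g q, q⟫_ℝ) / 2 := ⟨_, rfl⟩
  have hlow : ∀ x, C0 + ⟪y, x⟫_ℝ ≤ F x := by
    intro x
    have h1 := grad_ineq hF (hgrad p) x
    have h2 := grad_ineq hF (hgrad q) x
    rw [inner_sub_right] at h1 h2
    have hyx : ⟪y, x⟫_ℝ = 2⁻¹ * (⟪g p, x⟫_ℝ + ⟪g q, x⟫_ℝ) := by
      rw [hy, real_inner_smul_left, inner_add_left]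
    rw [hC0, hyx]
    linarith
  obtain ⟨K, hK⟩ : ∃ K : ℝ, K = F 0 - C0 := ⟨_, rfl⟩
  have hKnn : 0 ≤ K := by
    have := hlow 0
    simp only [inner_zero_right, add_zero] at this
    rw [hK]; linarith
  obtain ⟨δ, hδ⟩ : ∃ δ : ℝ, δ = 1 - ‖y‖ := ⟨_, rfl⟩
  have hδpos : 0 < δ := by rw [hδ]; linarith
  obtain ⟨ε, hε⟩ : ∃ ε : ℝ, ε = δ ^ 2 / (8 * (K + 1)) := ⟨_, rfl⟩
  have hεpos : 0 < ε := by rw [hε]; positivity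
  obtain ⟨z, hyz, hzb⟩ := perturbed_min hgrad hlow hεpos
  rw [← hK] at hzb
  have hεz : ε * ‖z‖ ≤ δ / 2 := by
    have hsq : (ε * ‖z‖) ^ 2 ≤ (δ / 2) ^ 2 := by
      have h1 : ε ^ 2 * ‖z‖ ^ 2 ≤ 2 * K * ε := by nlinarith
      have h2 : 2 * (K + 1) * ε ≤ δ ^ 2 / 4 := by
        rw [hε]
        have hKpos : (0:ℝ) < 8 * (K + 1) := by positivity
        rw [← mul_div_assoc, div_le_div_iff₀ hKpos (by norm_num : (0:ℝ) < 4)]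
        nlinarith [sq_nonneg δ]
      nlinarith
    nlinarith [mul_nonneg hεpos.le (norm_nonneg z), hδpos]
  have hfinal : (1 : ℝ) < 1 := by
    calc (1 : ℝ) = ‖g z‖ := (hunit z).symm
    _ = ‖y - ε • z‖ := by rw [hyz]; congr 1; abel
    _ ≤ ‖y‖ + ‖ε • z‖ := norm_sub_le _ _
    _ = ‖y‖ + ε * ‖z‖ := by rw [norm_smul, Real.norm_eq_abs, abs_of_pos hεpos]
    _ ≤ ‖y‖ + δ / 2 := by linarith
    _ = 1 - δ + δ / 2 := by rw [hδ]; ring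
    _ < 1 := by linarith
  exact absurd hfinal (lt_irrefl 1)

/-- A differentiable convex function with unit-norm gradient grows linearly along the
gradient line, and the gradient is constant along that line. -/
theorem stmt_6 (n : ℕ) (F : EuclideanSpace ℝ (Fin n) → ℝ)
    (g : EuclideanSpace ℝ (Fin n) → EuclideanSpace ℝ (Fin n))
    (hF : ConvexOn ℝ Set.univ F)
    (hgrad : ∀ x, HasGradientAt F (g x) x)
    (hunit : ∀ x, ‖g x‖ = 1)
    (p : EuclideanSpace ℝ (Fin n)) :
    ∀ t : ℝ, F (p + t • g p) = F p + t ∧ g (p + t • g p) = g p := by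
  intro t
  have hgc : g (p + t • g p) = g p := grad_const hF hgrad hunit p (p + t • g p)
  refine ⟨?_, hgc⟩
  have h1 := grad_ineq hF (hgrad p) (p + t • g p)
  have h2 := grad_ineq hF (hgrad (p + t • g p)) p
  rw [hgc] at h2
  have hd1 : p + t • g p - p = t • g p := by abel
  have hd2 : p - (p + t • g p) = -(t • g p) := by abel
  rw [hd1] at h1
  rw [hd2] at h2
  have hip : ⟪g p, t • g p⟫_ℝ = t := by
    rw [real_inner_smul_right, real_inner_self_eq_norm_sq, hunit p]
    ring
  rw [hip] at h1
  rw [inner_neg_right, hip] at h2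
  linarith
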